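/- arXiv:2403.16448 — 5 statements merged into one kernel-verified Lean document; each statement's English description precedes it below -/
import Mathlib

section
/- The r-Stirling number of the first kind satisfies S1_r(n,k) = Σ_{j=k}^n C(n,j) · S1(j,k) · r^{(n−j)↑}, where r^{m↑} denotes the rising factorial. -/
open Polynomial Finset

/-- The unsigned Stirling number of the first kind. -/
def stirling1 : ℕ → ℕ → ℕ
  | 0, 0 => 1
  | 0, _ + 1 => 0
  | _ + 1, 0 => 0
  | n + 1, k + 1 => n * stirling1 n (k + 1) + stirling1 n k

/-- The `r`-Stirling number of the first kind, defined via the expansion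
`(x+r)^{n↑} = Σ_k S1r r n k * x^k`, equivalently `(1/k!)` times the `k`-th
derivative in `r` of the rising factorial `r^{n↑}`. -/
noncomputable def S1r (r : ℝ) (n k : ℕ) : ℝ :=
  (1 / (k.factorial : ℝ)) * deriv^[k] (fun x : ℝ => (ascPochhammer ℝ n).eval x) r

lemma stirling1_eq_zero_of_lt : ∀ {n k : ℕ}, n < k → stirling1 n k = 0
  | 0, _ + 1, _ => rfl
  | n + 1, k + 1, h => by
      have h1 : n < k + 1 := by omega
      have h2 : n < k := by omega
      simp [stirling1, stirling1_eq_zero_of_lt h1, stirling1_eq_zero_of_lt h2]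

lemma ascPochhammer_coeff (n k : ℕ) :
    (ascPochhammer ℝ n).coeff k = (stirling1 n k : ℝ) := by
  induction n generalizing k with
  | zero =>
    cases k with
    | zero => simp [stirling1]
    | succ k => simp [stirling1, Polynomial.coeff_one]
  | succ n ih =>
    rw [ascPochhammer_succ_right]
    have : (X + (n : ℝ[X])) = X + C (n : ℝ) := by simp [Polynomial.C_eq_natCast]
    rw [this, mul_add, coeff_add, mul_comm _ (C (n:ℝ)), coeff_C_mul]
    cases k with
    | zero =>
      rw [mul_coeff_zero, coeff_X_zero, mul_zero, zero_add, ih]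
      cases n with
      | zero => simp [stirling1]
      | succ m => simp [stirling1, stirling1_eq_zero_of_lt]
    | succ k =>
      rw [coeff_mul_X, ih, ih, stirling1]
      push_cast; ring

lemma asc_vand (n : ℕ) (x r : ℝ) :
    (ascPochhammer ℝ n).eval (x + r) =
      ∑ j ∈ Finset.range (n + 1),
        (n.choose j : ℝ) * (ascPochhammer ℝ j).eval x * (ascPochhammer ℝ (n - j)).eval r := by
  induction n with
  | zero => simp
  | succ n ih =>
    have e2 : (∑ i ∈ Finset.range (n+1),
          (n.choose (i+1) : ℝ) * (ascPochhammer ℝ (i+1)).eval x *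
            (ascPochhammer ℝ (n - i)).eval r)
        + (ascPochhammer ℝ (n + 1)).eval r
        = ∑ j ∈ Finset.range (n+1), (n.choose j : ℝ) * (ascPochhammer ℝ j).eval x *
            ((ascPochhammer ℝ (n - j)).eval r * (r + ((n : ℝ) - (j : ℝ)))) := by
      have h1 : ∑ j ∈ Finset.range (n+2), (n.choose j : ℝ) * (ascPochhammer ℝ j).eval x *
            (ascPochhammer ℝ (n + 1 - j)).eval r
          = (∑ i ∈ Finset.range (n+1),
              (n.choose (i+1) : ℝ) * (ascPochhammer ℝ (i+1)).eval x *
                (ascPochhammer ℝ (n - i)).eval r)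
            + (ascPochhammer ℝ (n + 1)).eval r := by
        rw [Finset.sum_range_succ']
        simp [Nat.succ_sub_succ]
      have h2 : ∑ j ∈ Finset.range (n+2), (n.choose j : ℝ) * (ascPochhammer ℝ j).eval x *
            (ascPochhammer ℝ (n + 1 - j)).eval r
          = ∑ j ∈ Finset.range (n+1), (n.choose j : ℝ) * (ascPochhammer ℝ j).eval x *
            ((ascPochhammer ℝ (n - j)).eval r * (r + ((n : ℝ) - (j : ℝ)))) := by
        rw [Finset.sum_range_succ, Nat.choose_succ_self]
        simp only [Nat.cast_zero, zero_mul, add_zero]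
        refine Finset.sum_congr rfl fun j hj => ?_
        have hjn : j ≤ n := Nat.lt_succ_iff.mp (Finset.mem_range.mp hj)
        have : n + 1 - j = (n - j) + 1 := by omega
        rw [this, ascPochhammer_succ_eval]
        have : ((n - j : ℕ) : ℝ) = (n : ℝ) - (j : ℝ) := by
          push_cast [Nat.cast_sub hjn]; ring
        rw [this]
      rw [← h1, h2]
    have hstep : ∑ j ∈ Finset.range (n + 2),
          ((n+1).choose j : ℝ) * (ascPochhammer ℝ j).eval x *
            (ascPochhammer ℝ (n + 1 - j)).eval r
        = ∑ j ∈ Finset.range (n + 1),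
            (n.choose j : ℝ) * (ascPochhammer ℝ j).eval x * (ascPochhammer ℝ (n - j)).eval r
              * ((x + r) + n) := by
      rw [Finset.sum_range_succ']
      have e1 : ∀ i ∈ Finset.range (n+1),
          ((n+1).choose (i+1) : ℝ) * (ascPochhammer ℝ (i+1)).eval x *
            (ascPochhammer ℝ (n + 1 - (i+1))).eval r
          = (n.choose i : ℝ) * ((ascPochhammer ℝ i).eval x * (x + i)) *
              (ascPochhammer ℝ (n - i)).eval r
            + (n.choose (i+1) : ℝ) * (ascPochhammer ℝ (i+1)).eval x *
              (ascPochhammer ℝ (n - i)).eval r := by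
        intro i _
        rw [Nat.succ_sub_succ, Nat.choose_succ_succ, ascPochhammer_succ_eval]
        push_cast; ring
      rw [Finset.sum_congr rfl e1, Finset.sum_add_distrib]
      have h0 : ((n+1).choose 0 : ℝ) * (ascPochhammer ℝ 0).eval x *
          (ascPochhammer ℝ (n + 1 - 0)).eval r = (ascPochhammer ℝ (n+1)).eval r := by simp
      rw [h0, add_assoc, e2, ← Finset.sum_add_distrib]
      refine Finset.sum_congr rfl fun j hj => ?_
      ring
    rw [ascPochhammer_succ_eval, ih, hstep, Finset.sum_mul]

theorem rStirling_first_as_binomial_sum (r : ℝ) (n k : ℕ) :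
    S1r r n k =
      ∑ j ∈ Finset.Icc k n,
        (n.choose j : ℝ) * (stirling1 j k : ℝ) * (ascPochhammer ℝ (n - j)).eval r := by
  -- Step 1: iterated derivative of polynomial evaluation
  have deriv_iter : ∀ (p : ℝ[X]) (m : ℕ),
      deriv^[m] (fun x : ℝ => p.eval x) = fun x => ((derivative (R := ℝ))^[m] p).eval x := by
    intro p m
    induction m generalizing p with
    | zero => simp
    | succ m ih =>
      rw [Function.iterate_succ_apply]
      have hd : deriv (fun x : ℝ => p.eval x) = fun x => p.derivative.eval x :=
        funext fun x => Polynomial.deriv p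
      rw [hd, ih, ← Function.iterate_succ_apply]
  -- Step 2: S1r as Taylor coefficient
  have hS : S1r r n k = (taylor r (ascPochhammer ℝ n)).coeff k := by
    rw [taylor_coeff, S1r, deriv_iter]
    have hf : (derivative (R := ℝ))^[k] (ascPochhammer ℝ n)
        = (k.factorial : ℕ) • hasseDeriv k (ascPochhammer ℝ n) := by
      rw [← Polynomial.factorial_smul_hasseDeriv]; rfl
    rw [hf]
    beta_reduce
    have : ((k.factorial : ℕ) • hasseDeriv k (ascPochhammer ℝ n)).eval r
        = (k.factorial : ℝ) * (hasseDeriv k (ascPochhammer ℝ n)).eval r := by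
      rw [nsmul_eq_mul, eval_mul, eval_natCast]
    rw [this]
    have hk : (k.factorial : ℝ) ≠ 0 := Nat.cast_ne_zero.mpr k.factorial_ne_zero
    field_simp
  -- Step 3: Taylor expansion of the rising factorial as a polynomial identity
  have hpoly : taylor r (ascPochhammer ℝ n)
      = ∑ j ∈ Finset.range (n + 1),
          C ((n.choose j : ℝ) * (ascPochhammer ℝ (n - j)).eval r) * ascPochhammer ℝ j := by
    apply Polynomial.funext
    intro x
    rw [taylor_eval, asc_vand]
    rw [eval_finset_sum]
    refine Finset.sum_congr rfl fun j hj => ?_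
    rw [eval_mul, eval_C]
    ring
  rw [hS, hpoly, finset_sum_coeff]
  have hcoeff : ∀ j ∈ Finset.range (n + 1),
      (C ((n.choose j : ℝ) * (ascPochhammer ℝ (n - j)).eval r) * ascPochhammer ℝ j).coeff k
      = (n.choose j : ℝ) * (stirling1 j k : ℝ) * (ascPochhammer ℝ (n - j)).eval r := by
    intro j _
    rw [coeff_C_mul, ascPochhammer_coeff]
    ring
  rw [Finset.sum_congr rfl hcoeff]
  symm
  apply Finset.sum_subset
  · intro j hj
    rw [Finset.mem_Icc] at hj
    exact Finset.mem_range.mpr (by omega)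
  · intro j hj1 hj2
    rw [Finset.mem_range] at hj1
    rw [Finset.mem_Icc] at hj2
    have : j < k := by omega
    rw [stirling1_eq_zero_of_lt this]
    simp
end

section
/- Counting incomplete permutations: for integers n ≥ 1 and r ≥ 0, the number of permutations of {1,…,n+r} in which the r elements n+1,…,n+r all lie in distinct cycles equals (1+r)^{n↑} = (r+1)(r+2)⋯(r+n). -/
open Polynomial Finset Equiv

namespace CountPermAux

variable {k : ℕ}

open Equiv.Perm

lemma step_sameCycle (p : Fin (k + 1)) (e : Equiv.Perm (Fin k)) (x : Fin k) :
    (Equiv.Perm.decomposeFin.symm (p, e)).SameCycle x.succ (e x).succ := by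
  set σ := Equiv.Perm.decomposeFin.symm (p, e) with hσ
  have h : σ x.succ = Equiv.swap 0 p (e x).succ :=
    Equiv.Perm.decomposeFin_symm_apply_succ e p x
  by_cases hp : (e x).succ = p
  · have h0 : σ x.succ = 0 := by rw [h, hp, Equiv.swap_apply_right]
    have h1 : σ 0 = p := Equiv.Perm.decomposeFin_symm_apply_zero p e
    have : σ (σ x.succ) = (e x).succ := by rw [h0, h1, hp]
    have := Equiv.Perm.SameCycle.apply_right
      (Equiv.Perm.SameCycle.apply_right (Equiv.Perm.SameCycle.refl σ x.succ))
    rwa [‹σ (σ x.succ) = (e x).succ›] at this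
  · have hne : σ x.succ = (e x).succ := by
      rw [h, Equiv.swap_apply_of_ne_of_ne (Fin.succ_ne_zero _) hp]
    have := Equiv.Perm.SameCycle.apply_right (Equiv.Perm.SameCycle.refl σ x.succ)
    rwa [hne] at this

lemma forward_pow (p : Fin (k + 1)) (e : Equiv.Perm (Fin k)) :
    ∀ (m : ℕ) (i : Fin k),
      (Equiv.Perm.decomposeFin.symm (p, e)).SameCycle i.succ ((e ^ m) i).succ := by
  intro m
  induction m with
  | zero =>
    intro i
    simp only [pow_zero, Equiv.Perm.one_apply]
    exact Equiv.Perm.SameCycle.refl _ _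
  | succ m IH =>
    intro i
    have h1 : (e ^ (m + 1)) i = (e ^ m) (e i) := by
      rw [pow_succ, Equiv.Perm.mul_apply]
    rw [h1]
    exact (step_sameCycle p e i).trans (IH (e i))

lemma forward (p : Fin (k + 1)) (e : Equiv.Perm (Fin k)) {i j : Fin k}
    (h : e.SameCycle i j) :
    (Equiv.Perm.decomposeFin.symm (p, e)).SameCycle i.succ j.succ := by
  obtain ⟨m, -, hm⟩ := h.exists_pow_eq'
  rw [← hm]
  exact forward_pow p e m i

lemma backward_aux (p : Fin (k + 1)) (e : Equiv.Perm (Fin k)) :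
    ∀ m : ℕ, ∀ i j : Fin k,
      ((Equiv.Perm.decomposeFin.symm (p, e)) ^ m) i.succ = j.succ → e.SameCycle i j := by
  intro m
  induction m using Nat.strong_induction_on with
  | _ m IH =>
    intro i j hm
    set σ := Equiv.Perm.decomposeFin.symm (p, e) with hσ
    match m, hm with
    | 0, hm =>
      simp only [pow_zero, Equiv.Perm.one_apply] at hm
      exact (Fin.succ_injective _ hm) ▸ Equiv.Perm.SameCycle.refl e i
    | (m + 1), hm =>
      have hstep : (σ ^ (m + 1)) i.succ = (σ ^ m) (σ i.succ) := by
        rw [pow_succ, Equiv.Perm.mul_apply]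
      have happ : σ i.succ = Equiv.swap 0 p (e i).succ :=
        Equiv.Perm.decomposeFin_symm_apply_succ e p i
      by_cases hp : (e i).succ = p
      · have h0 : σ i.succ = 0 := by rw [happ, hp, Equiv.swap_apply_right]
        rw [hstep, h0] at hm
        match m, hm with
        | 0, hm => exact absurd hm.symm (Fin.succ_ne_zero j)
        | (m' + 1), hm =>
          have h1 : σ 0 = p := Equiv.Perm.decomposeFin_symm_apply_zero p e
          have h2 : ((σ : Equiv.Perm (Fin (k+1))) ^ (m' + 1)) 0 = (σ ^ m') (e i).succ := by
            rw [pow_succ, Equiv.Perm.mul_apply, h1, hp]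
          rw [h2] at hm
          have := IH m' (by omega) (e i) j hm
          exact this.of_apply_left
      · have hne : σ i.succ = (e i).succ := by
          rw [happ, Equiv.swap_apply_of_ne_of_ne (Fin.succ_ne_zero _) hp]
        rw [hstep, hne] at hm
        have := IH m (by omega) (e i) j hm
        exact this.of_apply_left

lemma sameCycle_succ_iff (p : Fin (k + 1)) (e : Equiv.Perm (Fin k)) (i j : Fin k) :
    (Equiv.Perm.decomposeFin.symm (p, e)).SameCycle i.succ j.succ ↔ e.SameCycle i j := by
  constructor
  · intro h
    obtain ⟨m, hm⟩ := h.exists_pow_eq'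
    exact backward_aux p e m i j hm.2
  · exact forward p e

def sndEquiv {α β : Type*} {p : β → Prop} : {s : α × β // p s.2} ≃ α × {b // p b} where
  toFun s := (s.1.1, ⟨s.1.2, s.2⟩)
  invFun x := ⟨(x.1, x.2.1), x.2.2⟩
  left_inv _ := rfl
  right_inv _ := rfl

lemma aux (n r : ℕ) :
    Nat.card {σ : Equiv.Perm (Fin (n + r)) //
        ∀ i j : Fin (n + r), n ≤ (i : ℕ) → n ≤ (j : ℕ) → i ≠ j → ¬ σ.SameCycle i j} =
      (ascPochhammer ℕ n).eval (r + 1) := by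
  induction n generalizing r with
  | zero =>
    simp only [Nat.zero_add, ascPochhammer_zero, Polynomial.eval_one]
    have hiff : ∀ σ : Equiv.Perm (Fin (0 + r)),
        (∀ i j : Fin (0 + r), 0 ≤ (i : ℕ) → 0 ≤ (j : ℕ) → i ≠ j → ¬ σ.SameCycle i j) ↔
          σ = 1 := by
      intro σ
      constructor
      · intro h
        have hfix : ∀ x, σ x = x := by
          intro x
          by_contra hx
          have hxne : x ≠ σ x := fun hh => hx hh.symm
          exact h x (σ x) (Nat.zero_le _) (Nat.zero_le _) hxne
            (Equiv.Perm.SameCycle.apply_right (Equiv.Perm.SameCycle.refl σ x))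
        exact Equiv.ext hfix
      · rintro rfl i j _ _ hij hsc
        exact hij (Equiv.Perm.sameCycle_one.mp hsc)
    rw [Nat.card_congr (Equiv.subtypeEquivRight hiff)]
    haveI : Unique {σ : Equiv.Perm (Fin (0 + r)) // σ = 1} :=
      ⟨⟨⟨1, rfl⟩⟩, by rintro ⟨σ, rfl⟩; rfl⟩
    exact Nat.card_unique
  | succ n IH =>
    rw [show n + 1 + r = n + r + 1 from Nat.add_right_comm n 1 r]
    have key : ∀ (p : Fin (n + r + 1)) (e : Equiv.Perm (Fin (n + r))),
        (∀ i j : Fin (n + r + 1), n + 1 ≤ (i : ℕ) → n + 1 ≤ (j : ℕ) → i ≠ j →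
          ¬ (Equiv.Perm.decomposeFin.symm (p, e)).SameCycle i j) ↔
        (∀ i j : Fin (n + r), n ≤ (i : ℕ) → n ≤ (j : ℕ) → i ≠ j → ¬ e.SameCycle i j) := by
      intro p e
      constructor
      · intro h i j hi hj hij hsc
        refine h i.succ j.succ ?_ ?_ ?_ ?_
        · simpa [Fin.val_succ] using Nat.succ_le_succ hi
        · simpa [Fin.val_succ] using Nat.succ_le_succ hj
        · exact fun hh => hij (Fin.succ_injective _ hh)
        · exact (sameCycle_succ_iff p e i j).mpr hsc
      · intro h i j hi hj hij hsc
        have hi0 : i ≠ 0 := by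
          intro hh; rw [hh] at hi; simp at hi
        have hj0 : j ≠ 0 := by
          intro hh; rw [hh] at hj; simp at hj
        have hi' : (i.pred hi0).succ = i := Fin.succ_pred i hi0
        have hj' : (j.pred hj0).succ = j := Fin.succ_pred j hj0
        rw [← hi', ← hj'] at hsc
        have hsc' := (sameCycle_succ_iff p e _ _).mp hsc
        refine h (i.pred hi0) (j.pred hj0) ?_ ?_ ?_ hsc'
        · have : ((i.pred hi0 : Fin (n + r)) : ℕ) = (i : ℕ) - 1 := by simp [Fin.coe_pred]
          omega
        · have : ((j.pred hj0 : Fin (n + r)) : ℕ) = (j : ℕ) - 1 := by simp [Fin.coe_pred]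
          omega
        · intro hh
          apply hij
          rw [← hi', ← hj', hh]
    have E : {σ : Equiv.Perm (Fin (n + r + 1)) //
        ∀ i j : Fin (n + r + 1), n + 1 ≤ (i : ℕ) → n + 1 ≤ (j : ℕ) → i ≠ j →
          ¬ σ.SameCycle i j} ≃
        Fin (n + r + 1) × {e : Equiv.Perm (Fin (n + r)) //
          ∀ i j : Fin (n + r), n ≤ (i : ℕ) → n ≤ (j : ℕ) → i ≠ j → ¬ e.SameCycle i j} := by
      refine (Equiv.subtypeEquiv Equiv.Perm.decomposeFin ?_).trans sndEquiv
      intro σ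
      have hσ : σ = Equiv.Perm.decomposeFin.symm (Equiv.Perm.decomposeFin σ) := by simp
      conv_lhs => rw [hσ]
      exact key _ _
    rw [Nat.card_congr E, Nat.card_prod, Nat.card_eq_fintype_card, Fintype.card_fin, IH r,
      ascPochhammer_succ_right]
    push_cast
    simp [Polynomial.eval_mul]
    ring

end CountPermAux

theorem count_perms_distinguished_in_distinct_cycles (n r : ℕ) (hn : 1 ≤ n) :
    Nat.card {σ : Equiv.Perm (Fin (n + r)) //
        ∀ i j : Fin (n + r), n ≤ (i : ℕ) → n ≤ (j : ℕ) → i ≠ j → ¬ σ.SameCycle i j} =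
      (ascPochhammer ℕ n).eval (r + 1) := by
  exact CountPermAux.aux n r
end

section
/- Counting partitions with r distinguished elements in distinct blocks: for n ≥ 1 and integer r ≥ 0, the number of set partitions of {1,…,n+r} in which the elements n+1,…,n+r lie in pairwise distinct blocks equals the r-Bell number B_{n,r} = Σ_{j=0}^n C(n,j) B_{n−j} r^j, where B_m is the m-th Bell number. -/
open Polynomial Finset

/-- The `m`-th Bell number: the number of set partitions of an `m`-element set. -/
noncomputable def bell (m : ℕ) : ℕ :=
  Nat.card (Finpartition (Finset.univ : Finset (Fin m)))

section Aux
variable {α β : Type*}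

instance setoidFinite [Finite α] : Finite (Setoid α) :=
  Finite.of_injective (fun s : Setoid α => s.r)
    (fun a b hab => by cases a; cases b; cases hab; rfl)

/-- Transport setoids along an equivalence. -/
def setoidCongr (e : α ≃ β) : Setoid α ≃ Setoid β where
  toFun s := ⟨fun x y => s.r (e.symm x) (e.symm y),
    ⟨fun _ => s.refl _, fun h => s.symm h, fun h h' => s.trans h h'⟩⟩
  invFun s := ⟨fun x y => s.r (e x) (e y),
    ⟨fun _ => s.refl _, fun h => s.symm h, fun h h' => s.trans h h'⟩⟩
  left_inv s := Setoid.ext fun x y => by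
    show s.r (e.symm (e x)) (e.symm (e y)) ↔ s.r x y; simp only [Equiv.symm_apply_apply]
  right_inv s := Setoid.ext fun x y => by
    show s.r (e (e.symm x)) (e (e.symm y)) ↔ s.r x y; simp only [Equiv.apply_symm_apply]

/-- The setoid associated to a finpartition of `univ`. -/
def Finpartition.toSetoid [Fintype α] [DecidableEq α]
    (P : Finpartition (univ : Finset α)) : Setoid α where
  r a b := b ∈ P.part a
  iseqv := by
    constructor
    · intro a; exact P.mem_part (mem_univ a)
    · intro a b hab
      rw [P.part_eq_of_mem (P.part_mem.2 (mem_univ a)) hab]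
      exact P.mem_part (mem_univ a)
    · intro a b c hab hbc
      rwa [P.part_eq_of_mem (P.part_mem.2 (mem_univ a)) hab] at hbc

noncomputable def finpartitionEquivSetoid (α : Type*) [Fintype α] [DecidableEq α] :
    Finpartition (univ : Finset α) ≃ Setoid α where
  toFun := Finpartition.toSetoid
  invFun s := @Finpartition.ofSetoid _ _ _ s (Classical.decRel _)
  left_inv P := by
    ext t
    simp only [Finpartition.ofSetoid, Finpartition.ofSetSetoid, Finpartition.toSetoid, mem_image, mem_univ, true_and]
    constructor
    · rintro ⟨a, rfl⟩
      convert P.part_mem.2 (mem_univ a) using 1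
      ext b; simp; exact Iff.rfl
    · intro ht
      obtain ⟨a, ha⟩ := P.nonempty_of_mem_parts ht
      refine ⟨a, ?_⟩
      rw [← P.part_eq_of_mem ht ha]
      ext b; simp; exact Iff.rfl
  right_inv s := by
    letI : DecidableRel s.r := Classical.decRel _
    ext x y
    exact Finpartition.mem_part_ofSetoid_iff_rel

lemma card_setoid_eq_bell (α : Type*) [Fintype α] [DecidableEq α] :
    Nat.card (Setoid α) = bell (Fintype.card α) := by
  rw [bell, Nat.card_congr (finpartitionEquivSetoid (Fin (Fintype.card α)))]
  exact Nat.card_congr (setoidCongr (Fintype.equivFin α))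

lemma nat_card_sigma {ι : Type*} [Fintype ι] (β : ι → Type*) [∀ i, Finite (β i)] :
    Nat.card (Σ i, β i) = ∑ i, Nat.card (β i) := by
  letI : ∀ i, Fintype (β i) := fun i => Fintype.ofFinite _
  simp [Nat.card_eq_fintype_card, Fintype.card_sigma]

end Aux

section Main
variable (n r : ℕ)

/-- Distinguished elements lie in pairwise distinct classes. -/
def Scond (s : Setoid (Fin (n + r))) : Prop :=
  ∀ i j : Fin (n + r), n ≤ (i : ℕ) → n ≤ (j : ℕ) → s.r i j → i = j

open Classical in
/-- For each ordinary element, which distinguished element (if any) it is related to. -/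
noncomputable def sig (s : {s : Setoid (Fin (n + r)) // Scond n r s}) (i : Fin n) :
    Option (Fin r) :=
  if h : ∃ k : Fin r, s.1.r (Fin.castAdd r i) (Fin.natAdd n k) then some h.choose else none

lemma sig_eq_some {s : {s : Setoid (Fin (n + r)) // Scond n r s}} {i : Fin n} {k : Fin r} :
    sig n r s i = some k ↔ s.1.r (Fin.castAdd r i) (Fin.natAdd n k) := by
  classical
  constructor
  · intro h
    rw [sig] at h
    split_ifs at h with h'
    · obtain ⟨rfl⟩ : h'.choose = k := by simpa using h
      exact h'.choose_spec
  · intro h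
    have h' : ∃ k : Fin r, s.1.r (Fin.castAdd r i) (Fin.natAdd n k) := ⟨k, h⟩
    rw [sig, dif_pos h']
    have := h'.choose_spec
    have heq : Fin.natAdd n h'.choose = Fin.natAdd n k :=
      s.2 _ _ (by simp) (by simp) (s.1.trans (s.1.symm this) h)
    have hck : h'.choose = k := by
      have hv := congrArg Fin.val heq
      simp only [Fin.coe_natAdd] at hv
      exact Fin.ext (by omega)
    rw [hck]

lemma sig_eq_none {s : {s : Setoid (Fin (n + r)) // Scond n r s}} {i : Fin n} :
    sig n r s i = none ↔ ∀ k : Fin r, ¬ s.1.r (Fin.castAdd r i) (Fin.natAdd n k) := by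
  rw [sig]
  split_ifs with h'
  · simpa using ⟨h'.choose, h'.choose_spec⟩
  · simpa using not_exists.mp h'

/-- Classification map on all of `Fin (n+r)` induced by `f`. -/
def cmap (f : Fin n → Option (Fin r)) (x : Fin (n + r)) : Option (Fin r) :=
  if h : (x : ℕ) < n then f ⟨x, h⟩ else some ⟨(x : ℕ) - n, by omega⟩

lemma cmap_castAdd (f : Fin n → Option (Fin r)) (i : Fin n) :
    cmap n r f (Fin.castAdd r i) = f i := by
  rw [cmap, dif_pos (by simpa using i.2)]
  congr 1

lemma cmap_natAdd (f : Fin n → Option (Fin r)) (k : Fin r) :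
    cmap n r f (Fin.natAdd n k) = some k := by
  rw [cmap, dif_neg (by simp)]
  congr 1
  exact Fin.ext (by simp)

lemma cmap_none_lt {f : Fin n → Option (Fin r)} {x : Fin (n + r)} (hx : cmap n r f x = none) :
    (x : ℕ) < n := by
  by_contra h
  rw [cmap, dif_neg h] at hx
  exact Option.some_ne_none _ hx

/-- The unassigned element corresponding to `x`. -/
def toD {f : Fin n → Option (Fin r)} (x : Fin (n + r)) (hx : cmap n r f x = none) :
    {i : Fin n // f i = none} :=
  ⟨⟨(x : ℕ), cmap_none_lt n r hx⟩, by
    have h := cmap_none_lt n r hx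
    rwa [cmap, dif_pos h] at hx⟩

/-- Reconstruct a setoid on `Fin (n+r)` from an assignment `f` and a setoid on the
unassigned elements. -/
def recon (f : Fin n → Option (Fin r)) (q : Setoid {i : Fin n // f i = none}) :
    Setoid (Fin (n + r)) where
  r x y := cmap n r f x = cmap n r f y ∧
    ∀ (hx : cmap n r f x = none) (hy : cmap n r f y = none), q.r (toD n r x hx) (toD n r y hy)
  iseqv := by
    refine ⟨fun x => ⟨rfl, fun hx hy => q.refl _⟩, ?_, ?_⟩
    · rintro x y ⟨h1, h2⟩
      exact ⟨h1.symm, fun hy hx => q.symm (h2 hx hy)⟩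
    · rintro x y z ⟨h1, h2⟩ ⟨h1', h2'⟩
      exact ⟨h1.trans h1', fun hx hz => q.trans (h2 hx (h1 ▸ hx)) (h2' (h1 ▸ hx) hz)⟩

lemma cmap_sig_some (s : {s : Setoid (Fin (n + r)) // Scond n r s}) (x : Fin (n + r))
    (k : Fin r) : cmap n r (sig n r s) x = some k ↔ s.1.r x (Fin.natAdd n k) := by
  by_cases h : (x : ℕ) < n
  · have hx : x = Fin.castAdd r ⟨(x : ℕ), h⟩ := Fin.ext (by simp)
    rw [hx, cmap_castAdd]
    exact sig_eq_some n r
  · rw [cmap, dif_neg h]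
    constructor
    · intro hk
      have hk' : x = Fin.natAdd n k := by
        refine Fin.ext ?_
        have := congrArg (fun o => (Option.getD o ⟨0, by omega⟩ : Fin r)) hk
        simp at this
        have := congrArg Fin.val this
        simp at this
        simp [Fin.coe_natAdd]
        omega
      exact hk' ▸ s.1.refl x
    · intro hrel
      have hx : x = Fin.natAdd n k := s.2 _ _ (by omega) (by simp) hrel
      have : (x : ℕ) = n + (k : ℕ) := by rw [hx]; simp
      congr 1
      exact Fin.ext (by simp; omega)

lemma cmap_sig_none (s : {s : Setoid (Fin (n + r)) // Scond n r s}) (x : Fin (n + r)) :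
    cmap n r (sig n r s) x = none ↔ ∀ k : Fin r, ¬ s.1.r x (Fin.natAdd n k) := by
  constructor
  · intro h k hrel
    have := (cmap_sig_some n r s x k).mpr hrel
    rw [h] at this
    cases this
  · intro h
    cases hcm : cmap n r (sig n r s) x with
    | none => rfl
    | some k => exact absurd ((cmap_sig_some n r s x k).mp hcm) (h k)

lemma scond_recon (f : Fin n → Option (Fin r)) (q : Setoid {i : Fin n // f i = none}) :
    Scond n r (recon n r f q) := by
  intro i j hi hj hrel
  obtain ⟨h1, -⟩ := hrel
  rw [cmap, dif_neg (by omega), cmap, dif_neg (by omega)] at h1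
  have := congrArg Fin.val (Option.some_injective _ h1)
  simp at this
  exact Fin.ext (by omega)

lemma castAdd_toD (f : Fin n → Option (Fin r)) (x : Fin (n + r)) (hx : cmap n r f x = none) :
    Fin.castAdd r (toD n r x hx).1 = x := Fin.ext (by simp [toD])

noncomputable def fiberEquiv (f : Fin n → Option (Fin r)) :
    {x : {s : Setoid (Fin (n + r)) // Scond n r s} // sig n r x = f} ≃
      Setoid {i : Fin n // f i = none} where
  toFun x := ⟨fun a b => x.1.1.r (Fin.castAdd r a.1) (Fin.castAdd r b.1),
    ⟨fun _ => x.1.1.refl _, fun h => x.1.1.symm h, fun h h' => x.1.1.trans h h'⟩⟩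
  invFun q := ⟨⟨recon n r f q, scond_recon n r f q⟩, by
    funext i
    cases hfi : f i with
    | some k =>
      refine (sig_eq_some n r).mpr ⟨?_, ?_⟩
      · rw [cmap_castAdd, cmap_natAdd, hfi]
      · intro hx hy
        rw [cmap_natAdd] at hy
        cases hy
    | none =>
      refine (sig_eq_none n r).mpr fun k hrel => ?_
      obtain ⟨h1, -⟩ := hrel
      rw [cmap_castAdd, cmap_natAdd, hfi] at h1
      cases h1⟩
  left_inv := by
    rintro ⟨⟨s, hc⟩, hs⟩
    subst hs
    refine Subtype.ext (Subtype.ext (Setoid.ext fun a b => ?_))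
    set s' : {s : Setoid (Fin (n + r)) // Scond n r s} := ⟨s, hc⟩ with hs'
    show (cmap n r (sig n r s') a = cmap n r (sig n r s') b ∧ ∀ hx hy, _) ↔ s.r a b
    constructor
    · rintro ⟨h1, h2⟩
      cases ha : cmap n r (sig n r s') a with
      | some k =>
        have hbk : cmap n r (sig n r s') b = some k := by rw [← h1, ha]
        have r1 := (cmap_sig_some n r s' a k).mp ha
        have r2 := (cmap_sig_some n r s' b k).mp hbk
        exact s.trans r1 (s.symm r2)
      | none =>
        have hb : cmap n r (sig n r s') b = none := by rw [← h1, ha]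
        have := h2 ha hb
        change s.r (Fin.castAdd r (toD n r a ha).1) (Fin.castAdd r (toD n r b hb).1) at this
        rwa [castAdd_toD, castAdd_toD] at this
    · intro hab
      have h1 : cmap n r (sig n r s') a = cmap n r (sig n r s') b := by
        cases ha : cmap n r (sig n r s') a with
        | some k =>
          have r1 := (cmap_sig_some n r s' a k).mp ha
          exact ((cmap_sig_some n r s' b k).mpr (s.trans (s.symm hab) r1)).symm
        | none =>
          have := (cmap_sig_none n r s' a).mp ha
          exact ((cmap_sig_none n r s' b).mpr fun k hk =>
            this k (s.trans hab hk)).symm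
      refine ⟨h1, fun hx hy => ?_⟩
      show s.r _ _
      rwa [castAdd_toD, castAdd_toD]
  right_inv := by
    intro q
    refine Setoid.ext fun a b => ?_
    have hxa : cmap n r f (Fin.castAdd r a.1) = none := by rw [cmap_castAdd]; exact a.2
    have hxb : cmap n r f (Fin.castAdd r b.1) = none := by rw [cmap_castAdd]; exact b.2
    have hta : toD n r _ hxa = a := Subtype.ext (Fin.ext (by simp [toD]))
    have htb : toD n r _ hxb = b := Subtype.ext (Fin.ext (by simp [toD]))
    show ((recon n r f q).r _ _) ↔ q.r a b
    constructor
    · rintro ⟨-, h2⟩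
      have := h2 hxa hxb
      rwa [hta, htb] at this
    · intro hq
      refine ⟨by rw [hxa, hxb], fun hx hy => ?_⟩
      have h1 : toD n r _ hx = a := Subtype.ext (Fin.ext (by simp [toD]))
      have h2 : toD n r _ hy = b := Subtype.ext (Fin.ext (by simp [toD]))
      rw [h1, h2]
      exact hq

lemma fiber_card (S : Finset (Fin n)) :
    #(univ.filter fun f : Fin n → Option (Fin r) =>
        univ.filter (fun i => (f i).isSome) = S) = r ^ S.card := by
  classical
  have : r ^ S.card = #(univ : Finset ({x // x ∈ S} → Fin r)) := by
    simp [Finset.card_univ, Fintype.card_coe]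
  rw [this]
  refine Finset.card_bij' (fun f hf => fun x => (f x.1).get ?_)
    (fun g _ => fun i => if h : i ∈ S then some (g ⟨i, h⟩) else none) ?_ ?_ ?_ ?_
  · simp only [mem_filter, mem_univ, true_and] at hf
    have : x.1 ∈ univ.filter (fun i => (f i).isSome) := by rw [hf]; exact x.2
    simpa using this
  · intro f hf
    exact mem_univ _
  · intro g _
    simp only [mem_filter, mem_univ, true_and]
    ext i
    by_cases h : i ∈ S <;> simp [h]
  · intro f hf
    simp only [mem_filter, mem_univ, true_and] at hf
    funext i
    by_cases h : i ∈ S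
    · simp [h]
    · simp only [dif_neg h]
      have : i ∉ univ.filter (fun i => (f i).isSome) := by rw [hf]; exact h
      simp only [mem_filter, mem_univ, true_and, Bool.not_eq_true] at this
      exact (Option.not_isSome_iff_eq_none.mp (by simp [this])).symm
  · intro g _
    funext x
    simp [x.2]

lemma card_scond_subtype :
    Nat.card {s : Setoid (Fin (n + r)) // Scond n r s} =
      ∑ f : Fin n → Option (Fin r), bell (#(univ.filter fun i : Fin n => f i = none)) := by
  classical
  rw [← Nat.card_congr (Equiv.sigmaFiberEquiv (sig n r)), nat_card_sigma]
  refine Finset.sum_congr rfl fun f _ => ?_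
  rw [Nat.card_congr (fiberEquiv n r f), card_setoid_eq_bell, Fintype.card_subtype]

lemma sum_eval :
    (∑ f : Fin n → Option (Fin r), bell (#(univ.filter fun i : Fin n => f i = none))) =
      ∑ j ∈ Finset.range (n + 1), n.choose j * bell (n - j) * r ^ j := by
  classical
  have hkey : ∀ f : Fin n → Option (Fin r),
      #(univ.filter fun i : Fin n => f i = none) =
        n - #(univ.filter fun i : Fin n => (f i).isSome) := by
    intro f
    have h1 := Finset.card_filter_add_card_filter_not
      (s := (univ : Finset (Fin n))) (p := fun i => (f i).isSome)
    have h2 : univ.filter (fun i : Fin n => ¬ (f i).isSome) =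
        univ.filter (fun i : Fin n => f i = none) := by
      apply Finset.filter_congr
      intro i _
      simp [Option.not_isSome_iff_eq_none]
    rw [h2] at h1
    have h3 : #(univ : Finset (Fin n)) = n := by simp
    omega
  simp_rw [hkey]
  rw [← Finset.sum_fiberwise_of_maps_to
    (g := fun f : Fin n → Option (Fin r) => univ.filter fun i => (f i).isSome)
    (t := (univ : Finset (Fin n)).powerset)
    (fun f _ => Finset.mem_powerset.mpr (Finset.subset_univ _))]
  have hinner : ∀ S ∈ (univ : Finset (Fin n)).powerset,
      (∑ f ∈ univ.filter (fun f : Fin n → Option (Fin r) =>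
          univ.filter (fun i => (f i).isSome) = S),
        bell (n - #(univ.filter fun i : Fin n => (f i).isSome))) =
      r ^ S.card * bell (n - S.card) := by
    intro S _
    rw [Finset.sum_congr rfl (fun f hf => ?_), Finset.sum_const, fiber_card, smul_eq_mul]
    simp only [mem_filter, mem_univ, true_and] at hf
    rw [hf]
  rw [Finset.sum_congr rfl hinner, Finset.sum_powerset]
  have hcard : #(univ : Finset (Fin n)) = n := by simp
  rw [hcard]
  refine Finset.sum_congr rfl fun j hj => ?_
  have h1 : ∀ S ∈ Finset.powersetCard j (univ : Finset (Fin n)),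
      r ^ S.card * bell (n - S.card) = r ^ j * bell (n - j) := fun S hS => by
    rw [(Finset.mem_powersetCard.mp hS).2]
  rw [Finset.sum_congr rfl h1, Finset.sum_const, Finset.card_powersetCard, hcard, smul_eq_mul]
  ring

end Main

theorem count_partitions_distinguished_in_distinct_blocks (n r : ℕ) (hn : 1 ≤ n) :
    Nat.card {P : Finpartition (Finset.univ : Finset (Fin (n + r))) //
        ∀ b ∈ P.parts, ∀ i j : Fin (n + r),
          n ≤ (i : ℕ) → n ≤ (j : ℕ) → i ∈ b → j ∈ b → i = j} =
      ∑ j ∈ Finset.range (n + 1), n.choose j * bell (n - j) * r ^ j := by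
  have e : {P : Finpartition (Finset.univ : Finset (Fin (n + r))) //
      ∀ b ∈ P.parts, ∀ i j : Fin (n + r),
        n ≤ (i : ℕ) → n ≤ (j : ℕ) → i ∈ b → j ∈ b → i = j} ≃
      {s : Setoid (Fin (n + r)) // Scond n r s} := by
    refine Equiv.subtypeEquiv (finpartitionEquivSetoid (Fin (n + r))) fun P => ?_
    constructor
    · intro h i j hi hj hrel
      exact h (P.part i) (P.part_mem.2 (mem_univ i)) i j hi hj (P.mem_part (mem_univ i)) hrel
    · intro h b hb i j hi hj hib hjb
      refine h i j hi hj ?_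
      show j ∈ P.part i
      rw [P.part_eq_of_mem hb hib]
      exact hjb
  rw [Nat.card_congr e, card_scond_subtype, sum_eval]
end

section
/- The r,s-Lah convolution identity: for all n ∈ ℕ, k ∈ {0,…,n} and all real r, s, Σ_{j=k}^n S1_r(n,j) · S2_s(j,k) = L(n,k)_{(r+s)/2}, where L(n,k)_t = C(n+2t−1, k+2t−1) · n!/k! is the t-Lah number. -/
open Polynomial Finset

/-- The forward finite difference operator `(Δ f)(r) = f (r+1) - f r`. -/
def fdiff (f : ℝ → ℝ) : ℝ → ℝ := fun r => f (r + 1) - f r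

/-- The `r`-Stirling number of the second kind, `(1/k!) Δ^k (r^n)`. -/
noncomputable def S2r (r : ℝ) (n k : ℕ) : ℝ :=
  (1 / (k.factorial : ℝ)) * (fdiff^[k] (fun x : ℝ => x ^ n)) r

/-- The `t`-Lah number `L(n,k)_t = (n!/k!) · (k+2t)^{(n−k)↑}/(n−k)!`. -/
noncomputable def rLah (t : ℝ) (n k : ℕ) : ℝ :=
  ((n.factorial : ℝ) / (k.factorial : ℝ)) *
    ((ascPochhammer ℝ (n - k)).eval ((k : ℝ) + 2 * t) / ((n - k).factorial : ℝ))

private lemma deriv_iterate_eval (k : ℕ) (p : ℝ[X]) :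
    deriv^[k] (fun x : ℝ => p.eval x) = fun x => ((derivative)^[k] p).eval x := by
  induction k generalizing p with
  | zero => rfl
  | succ k ih =>
    rw [Function.iterate_succ_apply, Function.iterate_succ_apply]
    have h : deriv (fun x : ℝ => p.eval x) = fun x => p.derivative.eval x := by
      funext x; exact Polynomial.deriv p
    rw [h, ih]

private lemma S1r_eq (r : ℝ) (n j : ℕ) :
    S1r r n j = (taylor r (ascPochhammer ℝ n)).coeff j := by
  rw [taylor_coeff, S1r, deriv_iterate_eval]
  have h := congrFun (Polynomial.factorial_smul_hasseDeriv (R := ℝ) (k := j))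
    (ascPochhammer ℝ n)
  simp only [LinearMap.smul_apply] at h
  have key : ((derivative)^[j] (ascPochhammer ℝ n)).eval r
      = (j.factorial : ℝ) * (hasseDeriv j (ascPochhammer ℝ n)).eval r := by
    rw [← h, nsmul_eq_mul]
    simp
  show 1 / (j.factorial : ℝ) * ((derivative)^[j] (ascPochhammer ℝ n)).eval r
      = (hasseDeriv j (ascPochhammer ℝ n)).eval r
  rw [key]
  have hj : (j.factorial : ℝ) ≠ 0 := Nat.cast_ne_zero.mpr j.factorial_ne_zero
  field_simp

private lemma S1r_sum (r x : ℝ) (n : ℕ) :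
    ∑ j ∈ Finset.range (n + 1), S1r r n j * x ^ j = (ascPochhammer ℝ n).eval (x + r) := by
  rw [← taylor_eval]
  rw [Polynomial.eval_eq_sum_range' (n := n + 1)
    (by rw [natDegree_taylor, ascPochhammer_natDegree]; omega)]
  exact Finset.sum_congr rfl fun j _ => by rw [S1r_eq]

private lemma fdiff_iter_linear {ι : Type*} (F : Finset ι) (c : ι → ℝ) (k : ℕ)
    (f : ι → ℝ → ℝ) :
    fdiff^[k] (fun x => ∑ j ∈ F, c j * f j x) = fun x => ∑ j ∈ F, c j * fdiff^[k] (f j) x := by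
  induction k generalizing f with
  | zero => rfl
  | succ k ih =>
    rw [Function.iterate_succ_apply]
    have h : fdiff (fun x => ∑ j ∈ F, c j * f j x)
        = fun x => ∑ j ∈ F, c j * fdiff (f j) x := by
      funext x
      simp only [fdiff, ← Finset.sum_sub_distrib, mul_sub]
    rw [h, ih]
    funext x
    refine Finset.sum_congr rfl fun j _ => ?_
    rw [← Function.iterate_succ_apply, Function.iterate_succ_apply]

private lemma fdiff_iter_const_mul (c : ℝ) (k : ℕ) (f : ℝ → ℝ) :
    fdiff^[k] (fun x => c * f x) = fun x => c * fdiff^[k] f x := by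
  induction k generalizing f with
  | zero => rfl
  | succ k ih =>
    rw [Function.iterate_succ_apply]
    have h : fdiff (fun x => c * f x) = fun x => c * fdiff f x := by
      funext x; simp [fdiff, mul_sub]
    rw [h, ih]
    funext x
    rw [← Function.iterate_succ_apply, Function.iterate_succ_apply]

private lemma fdiff_iter_shift (k : ℕ) (f : ℝ → ℝ) (t : ℝ) :
    fdiff^[k] (fun x => f (x + t)) = fun x => fdiff^[k] f (x + t) := by
  induction k generalizing f with
  | zero => rfl
  | succ k ih =>
    rw [Function.iterate_succ_apply]
    have h : fdiff (fun x => f (x + t)) = fun x => (fdiff f) (x + t) := by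
      funext x
      simp only [fdiff]
      ring_nf
    rw [h, ih]
    funext x
    rw [← Function.iterate_succ_apply, Function.iterate_succ_apply]

private lemma fdiff_pow_eq_zero : ∀ j k : ℕ, j < k → fdiff^[k] (fun x : ℝ => x ^ j) = 0 := by
  intro j
  induction j using Nat.strong_induction_on with
  | _ j ih =>
    intro k hk
    obtain ⟨k, rfl⟩ : ∃ m, k = m + 1 := ⟨k - 1, by omega⟩
    rw [Function.iterate_succ_apply]
    have h1 : fdiff (fun x : ℝ => x ^ j)
        = fun x => ∑ i ∈ Finset.range j, (j.choose i : ℝ) * x ^ i := by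
      funext x
      simp only [fdiff]
      rw [add_pow]
      rw [Finset.sum_range_succ]
      simp only [one_pow, Nat.choose_self, Nat.cast_one, mul_one, Nat.sub_self, pow_zero]
      rw [add_sub_cancel_right]
      exact Finset.sum_congr rfl fun i _ => by ring
    rw [h1, fdiff_iter_linear]
    funext x
    simp only [Pi.zero_apply]
    refine Finset.sum_eq_zero fun i hi => ?_
    have hij : i < j := Finset.mem_range.mp hi
    rw [ih i hij k (by omega)]
    simp

private lemma fdiff_asc (n : ℕ) (hn : 1 ≤ n) :
    fdiff (fun x : ℝ => (ascPochhammer ℝ n).eval x)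
      = fun x => (n : ℝ) * (ascPochhammer ℝ (n - 1)).eval (x + 1) := by
  obtain ⟨m, rfl⟩ : ∃ m, n = m + 1 := ⟨n - 1, by omega⟩
  funext a
  simp only [fdiff, Nat.add_sub_cancel]
  rw [ascPochhammer_succ_eval, ascPochhammer_succ_left]
  simp only [eval_mul, eval_X, eval_comp, eval_add, eval_one]
  push_cast
  ring

private lemma fdiff_iter_asc : ∀ k n : ℕ, k ≤ n → ∀ a : ℝ,
    fdiff^[k] (fun x : ℝ => (ascPochhammer ℝ n).eval x) a
      = (n.factorial : ℝ) / ((n - k).factorial : ℝ)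
          * (ascPochhammer ℝ (n - k)).eval (a + k) := by
  intro k
  induction k with
  | zero =>
    intro n _ a
    have hf : ((n.factorial : ℝ)) ≠ 0 := Nat.cast_ne_zero.mpr n.factorial_ne_zero
    simp [div_self hf]
  | succ k ih =>
    intro n h a
    rw [Function.iterate_succ_apply, fdiff_asc n (by omega), fdiff_iter_const_mul]
    have hs : fdiff^[k] (fun x : ℝ => (ascPochhammer ℝ (n - 1)).eval (x + 1))
        = fun x => fdiff^[k] (fun y : ℝ => (ascPochhammer ℝ (n - 1)).eval y) (x + 1) :=
      fdiff_iter_shift k (fun y : ℝ => (ascPochhammer ℝ (n - 1)).eval y) 1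
    rw [hs]
    beta_reduce
    rw [ih (n - 1) (by omega) (a + 1)]
    have h1 : n - 1 - k = n - (k + 1) := by omega
    have h2 : a + 1 + (k : ℝ) = a + ((k : ℕ) + 1 : ℕ) := by push_cast; ring
    rw [h1, h2]
    have h3 : (n.factorial : ℝ) = (n : ℝ) * ((n - 1).factorial : ℝ) := by
      obtain ⟨m, rfl⟩ : ∃ m, n = m + 1 := ⟨n - 1, by omega⟩
      simp [Nat.factorial_succ]
    rw [h3]
    ring

theorem rs_Lah_convolution (n k : ℕ) (hn : 1 ≤ n) (hk : k ≤ n) (r s : ℝ) :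
    ∑ j ∈ Finset.Icc k n, S1r r n j * S2r s j k = rLah ((r + s) / 2) n k := by
  have hsum : ∑ j ∈ Finset.Icc k n, S1r r n j * S2r s j k
      = ∑ j ∈ Finset.range (n + 1), S1r r n j * S2r s j k := by
    refine Finset.sum_subset ?_ ?_
    · intro j hj
      rw [Finset.mem_Icc] at hj
      rw [Finset.mem_range]
      omega
    · intro j hj hj2
      rw [Finset.mem_range] at hj
      rw [Finset.mem_Icc] at hj2
      have hjk : j < k := by omega
      have hz : S2r s j k = 0 := by
        rw [S2r, fdiff_pow_eq_zero j k hjk]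
        simp
      rw [hz, mul_zero]
  rw [hsum]
  have step1 : ∀ j ∈ Finset.range (n + 1), S1r r n j * S2r s j k
      = (1 / (k.factorial : ℝ)) * (S1r r n j * fdiff^[k] (fun x : ℝ => x ^ j) s) := by
    intro j _
    rw [S2r]
    ring
  rw [Finset.sum_congr rfl step1, ← Finset.mul_sum]
  have step2 : ∑ j ∈ Finset.range (n + 1), S1r r n j * fdiff^[k] (fun x : ℝ => x ^ j) s
      = fdiff^[k] (fun x : ℝ => ∑ j ∈ Finset.range (n + 1), S1r r n j * x ^ j) s := by
    rw [fdiff_iter_linear (Finset.range (n + 1)) (fun j => S1r r n j) k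
      (fun j x => x ^ j)]
  rw [step2]
  have step3 : (fun x : ℝ => ∑ j ∈ Finset.range (n + 1), S1r r n j * x ^ j)
      = fun x : ℝ => (ascPochhammer ℝ n).eval (x + r) := by
    funext x
    exact S1r_sum r x n
  rw [step3]
  have step4 : fdiff^[k] (fun x : ℝ => (ascPochhammer ℝ n).eval (x + r))
      = fun x => fdiff^[k] (fun y : ℝ => (ascPochhammer ℝ n).eval y) (x + r) :=
    fdiff_iter_shift k (fun y : ℝ => (ascPochhammer ℝ n).eval y) r
  rw [step4]
  beta_reduce
  rw [fdiff_iter_asc k n hk (s + r)]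
  rw [rLah]
  have harg : (k : ℝ) + 2 * ((r + s) / 2) = s + r + (k : ℝ) := by ring
  rw [harg]
  ring
end

section
/- The r-Dobiński formula: for all real θ > 0 and r ≥ 0 and all n ∈ ℕ, Σ_{m=0}^∞ (r+m)^n θ^m / m! = e^θ · T_{n,r}(θ), where T_{n,r}(θ) = Σ_{k=0}^n S2_r(n,k) θ^k is the r-Touchard polynomial. -/
open Polynomial Finset

lemma fdiff_eq_fwdDiff : fdiff = fwdDiff (1 : ℝ) := rfl

lemma fdiff_iter_pow_eq_zero : ∀ n k : ℕ, n < k → fdiff^[k] (fun x : ℝ => x ^ n) = 0 := by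
  intro n
  induction n using Nat.strong_induction_on with
  | _ n IH =>
    intro k hk
    obtain ⟨k, rfl⟩ := Nat.exists_eq_add_of_lt hk
    rw [Function.iterate_succ_apply]
    have h1 : fdiff (fun x : ℝ => x ^ n) =
        ∑ j ∈ Finset.range n, fun x : ℝ => (n.choose j : ℝ) * x ^ j := by
      funext x
      simp only [fdiff, Finset.sum_apply]
      rw [add_pow]
      rw [Finset.sum_range_succ]
      simp [mul_comm]
    rw [fdiff_eq_fwdDiff] at h1 ⊢
    rw [h1, fwdDiff_iter_finset_sum]
    · funext x
      simp only [Finset.sum_apply, Pi.zero_apply]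
      apply Finset.sum_eq_zero
      intro j hj
      have hjn : j < n := Finset.mem_range.mp hj
      have : (fun x : ℝ => (n.choose j : ℝ) * x ^ j) =
          (n.choose j : ℝ) • (fun x : ℝ => x ^ j) := by funext x; simp
      rw [this, fwdDiff_iter_const_smul, ← fdiff_eq_fwdDiff,
        IH j hjn (n + k) (by omega)]
      simp

/-- Key identity: `(r+m)^n = ∑_k S2r r n k * m↓k`. -/
lemma rpow_eq_sum_S2r (r : ℝ) (n m : ℕ) :
    (r + m) ^ n = ∑ k ∈ Finset.range (n + 1), S2r r n k * (m.descFactorial k : ℝ) := by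
  have hN := shift_eq_sum_fwdDiff_iter (1 : ℝ) (fun x : ℝ => x ^ n) m r
  simp only [nsmul_eq_mul, mul_one, ← fdiff_eq_fwdDiff] at hN
  have hL : (r + m) ^ n = ∑ k ∈ Finset.range (m + n + 2),
      (m.choose k : ℝ) * fdiff^[k] (fun x : ℝ => x ^ n) r := by
    rw [hN]
    apply Finset.sum_subset (Finset.range_subset_range.mpr (by omega : m + 1 ≤ m + n + 2))
    intro k _ hk
    have : m < k := by simpa using hk
    simp [Nat.choose_eq_zero_of_lt this]
  have hR : ∑ k ∈ Finset.range (n + 1), S2r r n k * (m.descFactorial k : ℝ) =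
      ∑ k ∈ Finset.range (m + n + 2), S2r r n k * (m.descFactorial k : ℝ) := by
    apply Finset.sum_subset (Finset.range_subset_range.mpr (by omega : n + 1 ≤ m + n + 2))
    intro k _ hk
    have hnk : n < k := by simpa using hk
    simp [S2r, fdiff_iter_pow_eq_zero n k hnk]
  rw [hL, hR]
  apply Finset.sum_congr rfl
  intro k _
  rw [S2r]
  have : (m.descFactorial k : ℝ) = (k.factorial : ℝ) * (m.choose k : ℝ) := by
    rw [← Nat.cast_mul, Nat.descFactorial_eq_factorial_mul_choose]
  rw [this]
  have hk0 : (k.factorial : ℝ) ≠ 0 := Nat.cast_ne_zero.mpr k.factorial_ne_zero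
  field_simp

lemma hasSum_descFactorial (θ : ℝ) (k : ℕ) :
    HasSum (fun m : ℕ => (m.descFactorial k : ℝ) * θ ^ m / (m.factorial : ℝ))
      (θ ^ k * Real.exp θ) := by
  have hexp : HasSum (fun j : ℕ => θ ^ j / (j.factorial : ℝ)) (Real.exp θ) := by
    rw [Real.exp_eq_exp_ℝ]
    exact NormedSpace.expSeries_div_hasSum_exp θ
  have h1 := hexp.mul_left (θ ^ k)
  have h2 : (fun j : ℕ => θ ^ k * (θ ^ j / (j.factorial : ℝ))) =
      fun j : ℕ => ((j + k).descFactorial k : ℝ) * θ ^ (j + k) / ((j + k).factorial : ℝ) := by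
    funext j
    have hd : ((j + k).descFactorial k : ℝ) * (j.factorial : ℝ) = ((j + k).factorial : ℝ) := by
      rw [← Nat.cast_mul, mul_comm]
      norm_cast
      simpa using Nat.factorial_mul_descFactorial (Nat.le_add_left k j)
    have hf : ((j + k).factorial : ℝ) ≠ 0 := Nat.cast_ne_zero.mpr (j + k).factorial_ne_zero
    have hj : (j.factorial : ℝ) ≠ 0 := Nat.cast_ne_zero.mpr j.factorial_ne_zero
    rw [pow_add]
    field_simp
    linear_combination (-(θ ^ j * θ ^ k)) * hd
  rw [h2] at h1
  have := (hasSum_nat_add_iff (f := fun m : ℕ =>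
    (m.descFactorial k : ℝ) * θ ^ m / (m.factorial : ℝ)) k).mp h1
  have hz : ∑ i ∈ Finset.range k, (i.descFactorial k : ℝ) * θ ^ i / (i.factorial : ℝ) = 0 := by
    apply Finset.sum_eq_zero
    intro i hi
    have : i.descFactorial k = 0 := Nat.descFactorial_eq_zero_iff_lt.mpr (Finset.mem_range.mp hi)
    simp [this]
  rwa [hz, add_zero] at this

theorem r_dobinski_formula (θ r : ℝ) (hθ : 0 < θ) (hr : 0 ≤ r) (n : ℕ) (hn : 1 ≤ n) :
    ∑' m : ℕ, (r + m) ^ n * θ ^ m / (m.factorial : ℝ) =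
      Real.exp θ * ∑ k ∈ Finset.range (n + 1), S2r r n k * θ ^ k := by
  have hsum : HasSum (fun m : ℕ => (r + m) ^ n * θ ^ m / (m.factorial : ℝ))
      (∑ k ∈ Finset.range (n + 1), S2r r n k * (θ ^ k * Real.exp θ)) := by
    have h : ∀ k ∈ Finset.range (n + 1),
        HasSum (fun m : ℕ => S2r r n k * ((m.descFactorial k : ℝ) * θ ^ m / (m.factorial : ℝ)))
          (S2r r n k * (θ ^ k * Real.exp θ)) :=
      fun k _ => (hasSum_descFactorial θ k).mul_left _
    have := hasSum_sum h
    convert this using 1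
    funext m
    rw [rpow_eq_sum_S2r r n m, Finset.sum_mul, Finset.sum_div]
    apply Finset.sum_congr rfl
    intro k _
    ring
  rw [hsum.tsum_eq, Finset.mul_sum]
  apply Finset.sum_congr rfl
  intro k _
  ring
end
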